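/- Let G : ℝ × ℝ → ℝ be twice continuously differentiable in a neighbourhood of (x*, p*), with G(x*, p*) = 0 and ∂G/∂x (x*, p*) = 0. Assume ∂G/∂p (x*, p*) ≠ 0, ∂²G/∂x² (x*, p*) ≠ 0, and ∂G/∂p (x*, p*) · ∂²G/∂x² (x*, p*) < 0. Then there exist ε > 0 and δ > 0 such that for every p with p* − δ < p < p*, the equation G(x, p) = 0 has no solution x with |x − x*| < ε. -/

import Mathlib

open Metric Set

/-- Auxiliary version with fixed signs: `G_p > 0`, `G_xx < 0`. -/
theorem saddle_aux
    (G : ℝ × ℝ → ℝ) (xs ps : ℝ)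
    (hG : ContDiffAt ℝ 2 G (xs, ps))
    (h0 : G (xs, ps) = 0)
    (hGx : deriv (fun x => G (x, ps)) xs = 0)
    (ha : 0 < deriv (fun p => G (xs, p)) ps)
    (hA : deriv (deriv (fun x => G (x, ps))) xs < 0) :
    ∃ ε > (0:ℝ), ∃ δ > (0:ℝ), ∀ p : ℝ, ps - δ < p → p < ps →
      ∀ x : ℝ, |x - xs| < ε → G (x, p) ≠ 0 := by
  set a := deriv (fun p => G (xs, p)) ps with ha_def
  -- get a neighborhood where G is C²
  obtain ⟨s, hsmem, hscd⟩ := hG.contDiffOn le_rfl (by simp)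
  obtain ⟨r0, hr0, hball⟩ := Metric.mem_nhds_iff.mp hsmem
  set U : Set (ℝ × ℝ) := ball ((xs, ps) : ℝ × ℝ) r0 with hU_def
  have hUo : IsOpen U := isOpen_ball
  have hU : ContDiffOn ℝ 2 G U := hscd.mono hball
  have hdiff : DifferentiableOn ℝ G U := hU.differentiableOn (by norm_num)
  have hfc : ContinuousOn (fderiv ℝ G) U :=
    hU.continuousOn_fderiv_of_isOpen hUo (by norm_num)
  set P : ℝ × ℝ → ℝ := fun z => fderiv ℝ G z (0, 1) with hP_def
  have hPc : ContinuousOn P U := hfc.clm_apply continuousOn_const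
  have hz0 : ((xs, ps) : ℝ × ℝ) ∈ U := mem_ball_self hr0
  -- partial derivative in p as HasDerivAt
  have key : ∀ z ∈ U, HasDerivAt (fun q => G (z.1, q)) (P z) z.2 := by
    intro z hz
    have hd : HasFDerivAt G (fderiv ℝ G z) z :=
      (hdiff.differentiableAt (hUo.mem_nhds hz)).hasFDerivAt
    have hline : HasDerivAt (fun q : ℝ => ((z.1, q) : ℝ × ℝ)) (0, 1) z.2 :=
      (hasDerivAt_const _ _).prodMk (hasDerivAt_id _)
    have := hd.comp_hasDerivAt z.2 hline
    exact this
  have hPa : P (xs, ps) = a := by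
    have := (key _ hz0).deriv
    simpa [ha_def] using this.symm
  have hPa0 : 0 < P (xs, ps) := hPa ▸ ha
  -- ball where P > a/2
  have hPat : ContinuousAt P (xs, ps) := hPc.continuousAt (hUo.mem_nhds hz0)
  have hev : ∀ᶠ z in nhds ((xs, ps) : ℝ × ℝ), a / 2 < P z := by
    have : {x : ℝ | a / 2 < x} ∈ nhds (P (xs, ps)) := by
      apply lt_mem_nhds; rw [hPa]; linarith
    exact hPat this
  obtain ⟨r1', hr1', hball1⟩ := Metric.mem_nhds_iff.mp hev
  set r1 := min r1' r0 with hr1_def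
  have hr1 : 0 < r1 := lt_min hr1' hr0
  have hball1' : ∀ z ∈ ball ((xs, ps) : ℝ × ℝ) r1, a / 2 < P z := fun z hz =>
    hball1 (ball_subset_ball (min_le_left _ _) hz)
  have hballU : ball ((xs, ps) : ℝ × ℝ) r1 ⊆ U := ball_subset_ball (min_le_right _ _)
  -- the slice f x = G (x, ps)
  set f : ℝ → ℝ := fun x => G (x, ps) with hf_def
  have hf2 : ContDiffAt ℝ 2 f xs := by
    have hline : ContDiffAt ℝ 2 (fun x : ℝ => ((x, ps) : ℝ × ℝ)) xs :=
      (contDiff_id.prodMk contDiff_const).contDiffAt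
    exact hG.comp xs hline
  obtain ⟨u, humem, hucd⟩ := hf2.contDiffOn le_rfl (by simp)
  obtain ⟨r2', hr2', hball2⟩ := Metric.mem_nhds_iff.mp humem
  set g : ℝ → ℝ := deriv f with hg_def
  have hBcd : ContDiffOn ℝ 2 f (ball xs r2') := hucd.mono hball2
  have hg1 : ContDiffOn ℝ 1 g (ball xs r2') :=
    hBcd.deriv_of_isOpen isOpen_ball (by norm_num)
  have hggc : ContinuousOn (deriv g) (ball xs r2') :=
    hg1.continuousOn_deriv_of_isOpen isOpen_ball le_rfl
  have hxs2 : xs ∈ ball xs r2' := mem_ball_self hr2'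
  -- deriv g < 0 on a small ball
  have hggat : ContinuousAt (deriv g) xs := hggc.continuousAt (isOpen_ball.mem_nhds hxs2)
  have hev2 : ∀ᶠ x in nhds xs, deriv g x < 0 := by
    have : {x : ℝ | x < 0} ∈ nhds (deriv g xs) := by
      apply gt_mem_nhds
      simpa [hg_def, hf_def] using hA
    exact hggat this
  obtain ⟨r2'', hr2'', hball3⟩ := Metric.mem_nhds_iff.mp hev2
  set r2 := min r2'' (min r2' r1) with hr2_def
  have hr2 : 0 < r2 := lt_min hr2'' (lt_min hr2' hr1)
  have hr2b : ball xs r2 ⊆ ball xs r2' :=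
    ball_subset_ball (le_trans (min_le_right _ _) (min_le_left _ _))
  have hr2r1 : r2 ≤ r1 := le_trans (min_le_right _ _) (min_le_right _ _)
  have hgneg : ∀ x ∈ ball xs r2, deriv g x < 0 := fun x hx =>
    hball3 (ball_subset_ball (min_le_left _ _) hx)
  -- f and g are differentiable on ball xs r2
  have hfd : ∀ x ∈ ball xs r2, HasDerivAt f (g x) x := by
    intro x hx
    have := (hBcd.differentiableOn (by norm_num)).differentiableAt
      (isOpen_ball.mem_nhds (hr2b hx))
    exact this.hasDerivAt
  have hgd : ∀ x ∈ ball xs r2, HasDerivAt g (deriv g x) x := by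
    intro x hx
    have := (hg1.differentiableOn (by norm_num)).differentiableAt
      (isOpen_ball.mem_nhds (hr2b hx))
    exact this.hasDerivAt
  -- g is strictly decreasing on ball xs r2
  have hI : (ball xs r2 : Set ℝ) = Ioo (xs - r2) (xs + r2) := Real.ball_eq_Ioo xs r2
  have hganti : StrictAntiOn g (ball xs r2) := by
    apply strictAntiOn_of_deriv_neg (hI ▸ convex_Ioo _ _)
    · exact fun x hx => ((hgd x hx).differentiableAt).continuousAt.continuousWithinAt
    · intro x hx
      exact hgneg x (interior_subset hx)
  have hgxs : g xs = 0 := hGx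
  have hxsmem : xs ∈ ball xs r2 := mem_ball_self hr2
  -- f ≤ 0 on ball xs r2
  have hfle : ∀ x ∈ ball xs r2, f x ≤ 0 := by
    intro x hx
    rcases lt_trichotomy x xs with hlt | heq | hgt
    · -- on [x, xs], deriv f = g > 0, so f increasing, f x < f xs = 0
      have hmono : StrictMonoOn f (Icc x xs) := by
        apply strictMonoOn_of_deriv_pos (convex_Icc _ _)
        · intro y hy
          have hy2 : y ∈ ball xs r2 := by
            rw [hI] at hx ⊢; rw [hI] at hxsmem
            simp only [mem_Ioo] at *
            constructor <;> [linarith [hx.1, hy.1]; linarith [hy.2]]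
          exact ((hfd y hy2).differentiableAt).continuousAt.continuousWithinAt
        · intro y hy
          rw [interior_Icc] at hy
          have hy2 : y ∈ ball xs r2 := by
            rw [hI] at hx ⊢
            simp only [mem_Ioo] at *
            constructor <;> [linarith [hx.1, hy.1]; linarith [hy.2, hr2]]
          rw [(hfd y hy2).deriv]
          have := hganti hy2 hxsmem hy.2
          rw [hgxs] at this
          exact this
      have := hmono (left_mem_Icc.mpr hlt.le) (right_mem_Icc.mpr hlt.le) hlt
      have hfxs : f xs = 0 := h0
      linarith
    · simp [heq, hf_def, h0]
    · have hmono : StrictAntiOn f (Icc xs x) := by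
        apply strictAntiOn_of_deriv_neg (convex_Icc _ _)
        · intro y hy
          have hy2 : y ∈ ball xs r2 := by
            rw [hI] at hx ⊢
            simp only [mem_Ioo] at *
            constructor <;> [linarith [hy.1, hr2]; linarith [hx.2, hy.2]]
          exact ((hfd y hy2).differentiableAt).continuousAt.continuousWithinAt
        · intro y hy
          rw [interior_Icc] at hy
          have hy2 : y ∈ ball xs r2 := by
            rw [hI] at hx ⊢
            simp only [mem_Ioo] at *
            constructor <;> [linarith [hy.1, hr2]; linarith [hx.2, hy.2]]
          rw [(hfd y hy2).deriv]
          have := hganti hxsmem hy2 hy.1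
          rw [hgxs] at this
          exact this
      have := hmono (left_mem_Icc.mpr hgt.le) (right_mem_Icc.mpr hgt.le) hgt
      have hfxs : f xs = 0 := h0
      linarith
  -- main conclusion
  refine ⟨r2, hr2, r1, hr1, fun p hp1 hp2 x hx => ?_⟩
  have hxball : x ∈ ball xs r2 := by
    rw [mem_ball, Real.dist_eq]; exact hx
  -- all points (x, q) with q ∈ Icc p ps lie in ball (xs,ps) r1
  have hmem : ∀ q ∈ Icc p ps, ((x, q) : ℝ × ℝ) ∈ ball ((xs, ps) : ℝ × ℝ) r1 := by
    intro q hq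
    rw [mem_ball, Prod.dist_eq]
    dsimp only
    rw [Real.dist_eq, Real.dist_eq]
    apply max_lt
    · exact lt_of_lt_of_le hx hr2r1
    · rw [abs_lt]
      obtain ⟨hq1, hq2⟩ := hq
      constructor <;> linarith
  have hcont : ContinuousOn (fun q => G (x, q)) (Icc p ps) := by
    intro q hq
    exact ((key _ (hballU (hmem q hq))).continuousAt).continuousWithinAt
  have hder : ∀ q ∈ Ioo p ps, HasDerivAt (fun q => G (x, q)) (P (x, q)) q := fun q hq =>
    key _ (hballU (hmem q (Ioo_subset_Icc_self hq)))
  obtain ⟨c, hc, hceq⟩ := exists_hasDerivAt_eq_slope (fun q => G (x, q))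
    (fun q => P (x, q)) hp2 hcont hder
  have hPc2 : a / 2 < P (x, c) := hball1' _ (hmem c (Ioo_subset_Icc_self hc))
  have hGxps : G (x, ps) ≤ 0 := hfle x hxball
  have heq2 : G (x, ps) - G (x, p) = P (x, c) * (ps - p) := by
    have hceq' : P (x, c) = (G (x, ps) - G (x, p)) / (ps - p) := hceq
    have hne : ps - p ≠ 0 := sub_ne_zero.mpr (ne_of_gt hp2)
    have := (div_eq_iff hne).mp hceq'.symm
    linarith [this]
  intro habs
  nlinarith [hPc2, hGxps, heq2, hp2, ha]

/-- Saddle-node bifurcation theorem (case `G_p · G_xx < 0`): no stationary points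
near `(xs, ps)` for parameters `p` below `ps`. -/
theorem saddle_node_no_solutions_below
    (G : ℝ × ℝ → ℝ) (xs ps : ℝ)
    (hG : ContDiffAt ℝ 2 G (xs, ps))
    (h0 : G (xs, ps) = 0)
    (hGx : deriv (fun x => G (x, ps)) xs = 0)
    (hGp : deriv (fun p => G (xs, p)) ps ≠ 0)
    (hGxx : deriv (deriv (fun x => G (x, ps))) xs ≠ 0)
    (hsign : deriv (fun p => G (xs, p)) ps *
        deriv (deriv (fun x => G (x, ps))) xs < 0) :
    ∃ ε > (0:ℝ), ∃ δ > (0:ℝ), ∀ p : ℝ, ps - δ < p → p < ps →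
      ∀ x : ℝ, |x - xs| < ε → G (x, p) ≠ 0 := by
  rcases hGp.lt_or_gt with hneg | hpos
  · set H : ℝ × ℝ → ℝ := fun z => -G z with hH
    have hH2 : ContDiffAt ℝ 2 H (xs, ps) := hG.neg
    have hH0 : H (xs, ps) = 0 := by simp [hH, h0]
    have hHx : deriv (fun x => H (x, ps)) xs = 0 := by
      show deriv (fun x => -G (x, ps)) xs = 0
      rw [deriv.fun_neg, hGx, neg_zero]
    have hHp : 0 < deriv (fun p => H (xs, p)) ps := by
      have : deriv (fun p => H (xs, p)) ps = -deriv (fun p => G (xs, p)) ps := deriv.neg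
      rw [this]; linarith
    have hHxx : deriv (deriv (fun x => H (x, ps))) xs < 0 := by
      have h1 : (deriv fun x => H (x, ps)) = fun y => -deriv (fun x => G (x, ps)) y :=
        deriv.neg'
      rw [h1, deriv.fun_neg]
      nlinarith [hsign]
    obtain ⟨ε, hε, δ, hδ, hmain⟩ := saddle_aux H xs ps hH2 hH0 hHx hHp hHxx
    exact ⟨ε, hε, δ, hδ, fun p hp1 hp2 x hx hGz =>
      hmain p hp1 hp2 x hx (by simp [hH, hGz])⟩
  · have hA : deriv (deriv (fun x => G (x, ps))) xs < 0 := by nlinarith [hsign]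
    exact saddle_aux G xs ps hG h0 hGx hpos hA
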